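/- Let f : Y → X be a quasi-compact flat monomorphism of schemes which is surjective on underlying topological spaces. Then f is an isomorphism. -/

import Mathlib

open AlgebraicGeometry CategoryTheory

section AuxiliaryLemmas

open TensorProduct

universe u

lemma flat_epi_localHom_bijective {A B : Type u} [CommRing A] [CommRing B]
    [IsLocalRing A] [IsLocalRing B] [Algebra A B] [Module.Flat A B]
    [IsLocalHom (algebraMap A B)]
    (hepi : ∀ s : B, s ⊗ₜ[A] (1 : B) = (1 : B) ⊗ₜ[A] s) :
    Function.Bijective (algebraMap A B) := by
  -- faithfully flat
  haveI hff : Module.FaithfullyFlat A B := by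
    constructor
    intro m hm heq
    have hm' : m = IsLocalRing.maximalIdeal A := IsLocalRing.eq_maximalIdeal hm
    have hle : m • (⊤ : Submodule A B) ≤
        (IsLocalRing.maximalIdeal B).restrictScalars A := by
      rw [Submodule.smul_le]
      intro a ha b _
      have ha' : ¬ IsUnit a := by
        rw [hm'] at ha
        exact ha
      have hb' : ¬ IsUnit (algebraMap A B a) := fun h => ha' (IsLocalHom.map_nonunit a h)
      rw [Submodule.restrictScalars_mem, Algebra.smul_def]
      exact Ideal.mul_mem_right b _ hb'
    have h1 : (1 : B) ∈ m • (⊤ : Submodule A B) := by rw [heq]; trivial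
    exact (IsLocalRing.maximalIdeal B).ne_top_iff_one.mp
      (Ideal.IsMaximal.ne_top inferInstance) (hle h1)
  constructor
  · -- injective
    have hcomp : (LinearMap.mul' A B) ∘ₗ (LinearMap.lTensor B (Algebra.linearMap A B)) =
        (TensorProduct.rid A B).toLinearMap := by
      apply TensorProduct.ext'
      intro b a
      simp [Algebra.smul_def, mul_comm]
    have hinj_t : Function.Injective (LinearMap.lTensor B (Algebra.linearMap A B)) := by
      have : Function.Injective ((LinearMap.mul' A B) ∘ₗ
          (LinearMap.lTensor B (Algebra.linearMap A B))) := by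
        rw [hcomp]; exact (TensorProduct.rid A B).injective
      exact Function.Injective.of_comp this
    set K := LinearMap.ker (Algebra.linearMap A B) with hK
    have hcomp0 : (Algebra.linearMap A B) ∘ₗ K.subtype = 0 := by
      ext ⟨x, hx⟩; exact hx
    have h0 : LinearMap.lTensor B ((Algebra.linearMap A B) ∘ₗ K.subtype) = 0 := by
      rw [hcomp0, LinearMap.lTensor_zero]
    rw [LinearMap.lTensor_comp] at h0
    have hsub0 : LinearMap.lTensor B K.subtype = 0 := by
      apply LinearMap.ext
      intro x
      apply hinj_t
      simp only [LinearMap.zero_apply, map_zero]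
      simpa using LinearMap.congr_fun h0 x
    have hsubinj : Function.Injective (LinearMap.lTensor B K.subtype) :=
      Module.Flat.lTensor_preserves_injective_linearMap _ K.injective_subtype
    haveI : Subsingleton (B ⊗[A] K) := by
      constructor
      intro x y
      apply hsubinj
      rw [hsub0]
      simp
    haveI := Module.FaithfullyFlat.lTensor_reflects_triviality A B K
    have : K = ⊥ := Submodule.eq_bot_of_subsingleton
    have := LinearMap.ker_eq_bot.mp this
    exact this
  · -- surjective
    set C := B ⧸ LinearMap.range (Algebra.linearMap A B) with hC
    set π : B →ₗ[A] C := (LinearMap.range (Algebra.linearMap A B)).mkQ with hπ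
    have hπ0 : LinearMap.lTensor B π = 0 := by
      apply TensorProduct.ext'
      intro b s
      have h1 : b ⊗ₜ[A] s = (b * s) ⊗ₜ[A] (1 : B) := by
        calc b ⊗ₜ[A] s = (b ⊗ₜ[A] (1 : B)) * ((1 : B) ⊗ₜ[A] s) := by
              rw [Algebra.TensorProduct.tmul_mul_tmul, mul_one, one_mul]
          _ = (b ⊗ₜ[A] (1 : B)) * (s ⊗ₜ[A] (1 : B)) := by rw [hepi s]
          _ = (b * s) ⊗ₜ[A] (1 : B) := by rw [Algebra.TensorProduct.tmul_mul_tmul, mul_one]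
      show LinearMap.lTensor B π (b ⊗ₜ[A] s) = 0
      rw [h1, LinearMap.lTensor_tmul]
      have hone : π 1 = 0 := by
        rw [hπ, Submodule.mkQ_apply, Submodule.Quotient.mk_eq_zero]
        exact LinearMap.mem_range.mpr ⟨1, by simp⟩
      rw [hone, tmul_zero]
    have hsurj_t : Function.Surjective (LinearMap.lTensor B π) :=
      LinearMap.lTensor_surjective B (Submodule.mkQ_surjective _)
    haveI : Subsingleton (B ⊗[A] C) := by
      constructor
      intro x y
      obtain ⟨x, rfl⟩ := hsurj_t x
      obtain ⟨y, rfl⟩ := hsurj_t y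
      rw [hπ0]
      simp
    haveI := Module.FaithfullyFlat.lTensor_reflects_triviality A B C
    have : LinearMap.range (Algebra.linearMap A B) = ⊤ :=
      Submodule.Quotient.subsingleton_iff.mp inferInstance
    intro b
    obtain ⟨a, ha⟩ := LinearMap.range_eq_top.mp this b
    exact ⟨a, ha⟩

section main
variable {Y X : AlgebraicGeometry.Scheme} (f : Y ⟶ X)


lemma epi_stalkMap_of_mono (hmono : Mono f) (y : Y) : Epi (f.stalkMap y) := by
  have hcomm := Scheme.SpecMap_stalkMap_fromSpecStalk f (x := y)
  have hmono2 : Mono (Spec.map (f.stalkMap y)) := by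
    have h1 : Mono (Spec.map (f.stalkMap y) ≫ X.fromSpecStalk (f.base y)) := by
      rw [hcomm]; exact mono_comp _ _
    exact mono_of_mono _ (X.fromSpecStalk (f.base y))
  constructor
  intro Z g h e
  have h2 : Spec.map g ≫ Spec.map (f.stalkMap y) = Spec.map h ≫ Spec.map (f.stalkMap y) := by
    rw [← Spec.map_comp, ← Spec.map_comp, e]
  exact Spec.map_injective ((cancel_mono (Spec.map (f.stalkMap y))).mp h2)

lemma isIso_stalkMap_aux (y : Y) (hf : RingHom.Flat (f.stalkMap y).hom)
    (he : Epi (f.stalkMap y)) : IsIso (f.stalkMap y) := by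
  letI alg : Algebra (X.presheaf.stalk (f.base y)) (Y.presheaf.stalk y) :=
    (f.stalkMap y).hom.toAlgebra
  haveI : Module.Flat (X.presheaf.stalk (f.base y)) (Y.presheaf.stalk y) := hf
  haveI : IsLocalHom (algebraMap (X.presheaf.stalk (f.base y)) (Y.presheaf.stalk y)) :=
    inferInstanceAs (IsLocalHom (f.stalkMap y).hom)
  have htmul := fun s => ((Algebra.isEpi_iff_forall_one_tmul_eq _ _).mp ((CommRingCat.epi_iff_tmul_eq_tmul
      (R := X.presheaf.stalk (f.base y)) (S := Y.presheaf.stalk y)).mp (by exact he)) s).symm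
  have hb := flat_epi_localHom_bijective htmul
  exact (ConcreteCategory.isIso_iff_bijective _).mpr hb


end main

end AuxiliaryLemmas

/-- A morphism of schemes is flat if all the induced maps on stalks are flat ring
homomorphisms. -/
def SchemeHomFlat {X Y : AlgebraicGeometry.Scheme} (f : X ⟶ Y) : Prop :=
  ∀ x : X, RingHom.Flat (f.stalkMap x).hom

/-- A quasi-compact flat monomorphism of schemes which is surjective on
underlying topological spaces is an isomorphism. -/
theorem isIso_of_quasiCompact_flat_mono_surjective
    {Y X : AlgebraicGeometry.Scheme} (f : Y ⟶ X) [QuasiCompact f]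
    (hflat : SchemeHomFlat f) (hmono : Mono f)
    (hsurj : Function.Surjective f.base) : IsIso f := by
  haveI := hmono
  have hiso : ∀ y : Y, IsIso (f.stalkMap y) := fun y =>
    isIso_stalkMap_aux f y (hflat y) (epi_stalkMap_of_mono f hmono y)
  have hinj : Function.Injective f.base := f.injective
  have hspec : SpecializingMap f.base := by
    intro y x' h
    obtain ⟨y₂, rfl⟩ := hsurj x'
    refine ⟨y₂, ?_, rfl⟩
    haveI := hiso y₂
    haveI : IsIso (Spec.map (f.stalkMap y₂)) := inferInstance
    have hr : Set.range (X.fromSpecStalk (f.base y₂)).base =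
        f.base '' Set.range (Y.fromSpecStalk y₂).base := by
      have hs : Function.Surjective (Spec.map (f.stalkMap y₂)).base :=
        (TopCat.epi_iff_surjective _).mp inferInstance
      have h0 : Set.range ((Spec.map (f.stalkMap y₂) ≫ X.fromSpecStalk (f.base y₂)).base) =
          Set.range (X.fromSpecStalk (f.base y₂)).base := by
        rw [Scheme.Hom.comp_base, TopCat.coe_comp, Set.range_comp, Set.range_eq_univ.mpr hs,
          Set.image_univ]
      rw [← h0, Scheme.SpecMap_stalkMap_fromSpecStalk f (x := y₂), Scheme.Hom.comp_base,
        TopCat.coe_comp, Set.range_comp]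
    have hmem : f.base y ∈ Set.range (X.fromSpecStalk (f.base y₂)).base := by
      rw [Scheme.range_fromSpecStalk]
      exact h
    rw [hr] at hmem
    obtain ⟨y₃, hy₃, he⟩ := hmem
    rw [Scheme.range_fromSpecStalk] at hy₃
    rwa [← hinj he]
  have hclosed : IsClosedMap f.base := (isClosedMap_iff_specializingMap f).mpr hspec
  have hopen : IsOpenMap f.base := by
    intro U hU
    have h1 : IsClosed (f.base '' Uᶜ) := hclosed _ hU.isClosed_compl
    have h2 : f.base '' U = (f.base '' Uᶜ)ᶜ := by
      rw [Set.image_compl_eq ⟨hinj, hsurj⟩, compl_compl]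
    rw [h2]
    exact h1.isOpen_compl
  have hbase : IsIso f.base := by
    let e : Homeomorph Y X := Equiv.toHomeomorphOfContinuousOpen
      (Equiv.ofBijective f.base ⟨hinj, hsurj⟩) f.base.hom.continuous hopen
    have : f.base = (TopCat.isoOfHomeo e).hom := rfl
    rw [this]
    infer_instance
  rw [isIso_iff_isIso_stalkMap]
  exact ⟨hbase, hiso⟩
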